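/- Let d, N ∈ ℕ, let α₁ < ⋯ < α_N be points of [0,∞], let τ₁,…,τ_N > 0 with ∑_{ℓ=1}^N τℓ = 1, let t ∈ ℝ∖{0}, and define f : (ℝ≥0)^d ∖ {0} → ℝ by f(x) = ‖x‖₁ · exp₂( t·∑_{ℓ=1}^N τℓ·H_{αℓ}(x/‖x‖₁) ), where ‖x‖₁ = ∑_i x_i. Then: (1) f is concave whenever t > 0, αℓ < 1 for all ℓ, and ∑_{ℓ=1}^N τℓ·αℓ/(1−αℓ) ≤ 1/t; (2) f is convex whenever t < 0 and either (a) αℓ ≤ 1 for all ℓ, or (b) αℓ < 1 for all ℓ ≤ N−1, α_N ∈ (1,∞], and ∑_{ℓ=1}^N τℓ·αℓ/(1−αℓ) ≤ 1/t, with the convention that α/(1−α) = −1 for α = ∞. -/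

import Mathlib

open MeasureTheory
open scoped ENNReal

noncomputable section

/-- Base-2 logarithm. -/
def log2 (x : ℝ) : ℝ := Real.logb 2 x

/-- Base-2 exponential. -/
def exp2 (x : ℝ) : ℝ := (2 : ℝ) ^ x

/-- Rényi entropy of order `α ∈ [0,∞]` of a vector `p` on a finite set. -/
def renyi {X : Type*} [Fintype X] (α : ℝ≥0∞) (p : X → ℝ) : ℝ :=
  if α = 0 then log2 (Nat.card {x : X // 0 < p x})
  else if α = 1 then -∑ x, p x * log2 (p x)
  else if α = ⊤ then -log2 (⨆ x, p x)
  else (1 - α.toReal)⁻¹ * log2 (∑ x, p x ^ α.toReal)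

/-- A probability vector on a finite set. -/
def IsProbVec {X : Type*} [Fintype X] (p : X → ℝ) : Prop :=
  (∀ x, 0 ≤ p x) ∧ ∑ x, p x = 1

/-- A doubly stochastic matrix. -/
def DoublyStochastic {X : Type*} [Fintype X] (S : Matrix X X ℝ) : Prop :=
  (∀ i j, 0 ≤ S i j) ∧ (∀ i, ∑ j, S i j = 1) ∧ (∀ j, ∑ i, S i j = 1)

/-- `Q` is obtained from `P` by a conditionally mixing channel. -/
def CondMixed {X Y Y' : Type*} [Fintype X] [Fintype Y] [Fintype Y']
    (P : Matrix X Y ℝ) (Q : Matrix X Y' ℝ) : Prop :=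
  ∃ (k : ℕ) (S : Fin k → Matrix X X ℝ) (D : Fin k → Matrix Y Y' ℝ),
    (∀ i, DoublyStochastic (S i)) ∧
    (∀ i a b, 0 ≤ D i a b) ∧
    (∀ a, ∑ b, ∑ i, D i a b = 1) ∧
    Q = ∑ i, S i * P * D i

/-- A joint probability distribution on finite alphabets, viewed as a matrix. -/
def IsJointProb {X Y : Type*} [Fintype X] [Fintype Y] (P : Matrix X Y ℝ) : Prop :=
  (∀ x y, 0 ≤ P x y) ∧ ∑ x, ∑ y, P x y = 1

/-- Marginal on the conditioning system: the `y`-th column sum. -/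
def margY {X Y : Type*} [Fintype X] (P : Matrix X Y ℝ) (y : Y) : ℝ := ∑ x, P x y

/-- The conditioned distribution (normalized `y`-th column). -/
def condX {X Y : Type*} [Fintype X] (P : Matrix X Y ℝ) (y : Y) : X → ℝ :=
  fun x => P x y / margY P y

/-- The conditional entropy `H_{t,τ}`. -/
def Hbulk {X Y : Type*} [Fintype X] [Fintype Y] (t : ℝ) (τ : Measure ℝ≥0∞)
    (P : Matrix X Y ℝ) : ℝ :=
  t⁻¹ * log2 (∑ y ∈ Finset.univ.filter (fun y => 0 < margY P y),
    margY P y * exp2 (t * ∫ α, renyi α (condX P y) ∂τ))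

/-- The conditional entropy `H_{0,α}`. -/
def HzeroA {X Y : Type*} [Fintype X] [Fintype Y] (α : ℝ≥0∞) (P : Matrix X Y ℝ) : ℝ :=
  ∑ y ∈ Finset.univ.filter (fun y => 0 < margY P y), margY P y * renyi α (condX P y)

/-- The conditional entropy `H_{-∞,τ}`. -/
def HnegInf {X Y : Type*} [Fintype X] [Fintype Y] (τ : Measure ℝ≥0∞)
    (P : Matrix X Y ℝ) : ℝ :=
  sInf ((fun y => ∫ α, renyi α (condX P y) ∂τ) '' {y | 0 < margY P y})

/-- The conditional entropy `H_{+∞,0}`. -/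
def HposInf {X Y : Type*} [Fintype X] [Fintype Y] (P : Matrix X Y ℝ) : ℝ :=
  sSup ((fun y => renyi 0 (condX P y)) '' {y | 0 < margY P y})

/-- The parameter set `𝒟_bulk`. -/
def Dbulk : Set (ℝ × Measure ℝ≥0∞) :=
  {p | p.1 ≠ 0 ∧ IsProbabilityMeasure p.2 ∧
    ∀ (d n n' : ℕ) (P : Matrix (Fin d) (Fin n) ℝ) (Q : Matrix (Fin d) (Fin n') ℝ),
      IsJointProb P → CondMixed P Q → Hbulk p.1 p.2 P ≤ Hbulk p.1 p.2 Q}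

/-- The parameter set `𝒟_{-∞}`. -/
def DnegInf : Set (Measure ℝ≥0∞) :=
  {τ | IsProbabilityMeasure τ ∧
    ∀ (d n n' : ℕ) (P : Matrix (Fin d) (Fin n) ℝ) (Q : Matrix (Fin d) (Fin n') ℝ),
      IsJointProb P → CondMixed P Q → HnegInf τ P ≤ HnegInf τ Q}

/-- `P'` is obtained from `P` by relabeling (injections) and embedding, with zeros elsewhere. -/
def Embeds {X Y X' Y' : Type*} [Fintype X] [Fintype Y] [Fintype X'] [Fintype Y']
    (P : Matrix X Y ℝ) (P' : Matrix X' Y' ℝ) : Prop :=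
  ∃ (f : X ↪ X') (g : Y ↪ Y'),
    (∀ x y, P' (f x) (g y) = P x y) ∧
    (∀ x' y', P' x' y' ≠ 0 → (∃ x, f x = x') ∧ (∃ y, g y = y'))

/-- Conditional majorization: after a common embedding, a conditionally mixing channel maps
(the embedding of) `P` to (the embedding of) `Q`. -/
def CondMajorizes {X Y X' Y' : Type*} [Fintype X] [Fintype Y] [Fintype X'] [Fintype Y']
    (P : Matrix X Y ℝ) (Q : Matrix X' Y' ℝ) : Prop :=
  ∃ (m n n' : ℕ) (P' : Matrix (Fin m) (Fin n) ℝ) (Q' : Matrix (Fin m) (Fin n') ℝ),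
    Embeds P P' ∧ Embeds Q Q' ∧ CondMixed P' Q'

/-- Kronecker product of matrices. -/
def kron {X Y X' Y' : Type*} (P : Matrix X Y ℝ) (Q : Matrix X' Y' ℝ) :
    Matrix (X × X') (Y × Y') ℝ :=
  Matrix.of fun x y => P x.1 y.1 * Q x.2 y.2

/-- `n`-fold Kronecker power of a matrix. -/
def kronPow {X Y : Type*} (P : Matrix X Y ℝ) (n : ℕ) :
    Matrix (Fin n → X) (Fin n → Y) ℝ :=
  Matrix.of fun x y => ∏ i, P (x i) (y i)

/-- Sum of all entries of a matrix. -/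
def totalMass {X Y : Type*} [Fintype X] [Fintype Y] (P : Matrix X Y ℝ) : ℝ :=
  ∑ x, ∑ y, P x y

/-- `α/(1-α)`, with the convention that it equals `-1` at `α = ∞`. -/
def aRatio (α : ℝ≥0∞) : ℝ := if α = ⊤ then -1 else α.toReal / (1 - α.toReal)

/-- `α/(α-1)`, with the convention that it equals `1` at `α = ∞`. -/
def aRatio' (α : ℝ≥0∞) : ℝ := if α = ⊤ then 1 else α.toReal / (α.toReal - 1)

/-- Rényi relative entropy `D_α(p‖r)`. -/
def relRenyi {X : Type*} [Fintype X] (α : ℝ≥0∞) (p r : X → ℝ) : ℝ :=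
  if α = 1 then ∑ x, p x * log2 (p x / r x)
  else if α = ⊤ then log2 (⨆ x, p x / r x)
  else (α.toReal - 1)⁻¹ * log2 (∑ x, p x ^ α.toReal * r x ^ (1 - α.toReal))

/-- The quantity `I_{t,τ}(P‖R)`. -/
def Ibulk {X Y : Type*} [Fintype X] [Fintype Y] (t : ℝ) (τ : Measure ℝ≥0∞)
    (P : Matrix X Y ℝ) (R : X → ℝ) : ℝ :=
  -t⁻¹ * log2 (∑ y ∈ Finset.univ.filter (fun y => 0 < margY P y),
    margY P y * exp2 (-t * ∫ α, relRenyi α (condX P y) R ∂τ))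

/-- The quantity `I_{-∞,τ}(P‖R)`. -/
def InegInf {X Y : Type*} [Fintype X] [Fintype Y] (τ : Measure ℝ≥0∞)
    (P : Matrix X Y ℝ) (R : X → ℝ) : ℝ :=
  sSup ((fun y => ∫ α, relRenyi α (condX P y) R ∂τ) '' {y | 0 < margY P y})

/-- A conditioned `R`-preserving channel maps `P` to `Q`. -/
def CondPreserving {X Y Y' : Type*} [Fintype X] [Fintype Y] [Fintype Y'] (R : X → ℝ)
    (P : Matrix X Y ℝ) (Q : Matrix X Y' ℝ) : Prop :=
  ∃ (k : ℕ) (G : Fin k → Matrix X X ℝ) (D : Fin k → Matrix Y Y' ℝ),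
    (∀ i a b, 0 ≤ G i a b) ∧
    (∀ i b, ∑ a, G i a b = 1) ∧
    (∀ i, (G i).mulVec R = R) ∧
    (∀ i a b, 0 ≤ D i a b) ∧
    (∀ a, ∑ b, ∑ i, D i a b = 1) ∧
    Q = ∑ i, G i * P * D i

/-- Total variation distance between two matrices. -/
def tvDist {X Y : Type*} [Fintype X] [Fintype Y] (P Q : Matrix X Y ℝ) : ℝ :=
  (1 / 2) * ∑ x, ∑ y, |P x y - Q x y|

namespace S12
open Real Finset

lemma exp2_pos (x : ℝ) : 0 < exp2 x := Real.rpow_pos_of_pos two_pos x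

lemma exp2_add (a b : ℝ) : exp2 (a + b) = exp2 a * exp2 b := Real.rpow_add two_pos a b

lemma exp2_sum {ι : Type*} (s : Finset ι) (g : ι → ℝ) :
    exp2 (∑ i ∈ s, g i) = ∏ i ∈ s, exp2 (g i) := by
  classical
  induction s using Finset.induction with
  | empty => simp [exp2]
  | @insert _ _ h ih => rw [Finset.sum_insert h, exp2_add, ih, Finset.prod_insert h]

lemma exp2_mul_log2 {A : ℝ} (hA : 0 < A) (c : ℝ) : exp2 (c * log2 A) = A ^ c := by
  rw [exp2, log2, mul_comm, Real.rpow_mul (by norm_num : (0:ℝ) ≤ 2),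
    Real.rpow_logb (by norm_num) (by norm_num) hA]

lemma log2_le_log2 {x y : ℝ} (hx : 0 < x) (hxy : x ≤ y) : log2 x ≤ log2 y :=
  Real.logb_le_logb_of_le one_lt_two hx hxy

lemma log2_mul {x y : ℝ} (hx : x ≠ 0) (hy : y ≠ 0) : log2 (x * y) = log2 x + log2 y :=
  Real.logb_mul hx hy

lemma log2_concave {U V a b : ℝ} (hU : 0 < U) (hV : 0 < V) (ha : 0 ≤ a) (hb : 0 ≤ b)
    (hab : a + b = 1) : a * log2 U + b * log2 V ≤ log2 (a * U + b * V) := by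
  have h := strictConcaveOn_log_Ioi.concaveOn.2 (Set.mem_Ioi.2 hU) (Set.mem_Ioi.2 hV) ha hb hab
  simp only [smul_eq_mul] at h
  have h2 : (0:ℝ) < Real.log 2 := Real.log_pos one_lt_two
  unfold log2 Real.logb
  have e : a * (Real.log U / Real.log 2) + b * (Real.log V / Real.log 2)
      = (a * Real.log U + b * Real.log V) / Real.log 2 := by ring
  rw [e]
  exact (div_le_div_iff_of_pos_right h2).mpr h


variable {d : ℕ}

def SS (d : ℕ) : Set (Fin d → ℝ) := {x | (∀ i, 0 ≤ x i) ∧ x ≠ 0}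

lemma pos_entry {x : Fin d → ℝ} (hx : x ∈ SS d) : ∃ i, 0 < x i := by
  obtain ⟨i, hi⟩ := Function.ne_iff.1 hx.2
  exact ⟨i, lt_of_le_of_ne (hx.1 i) (by simpa [eq_comm] using hi)⟩

lemma sum_pos' {x : Fin d → ℝ} (hx : x ∈ SS d) : 0 < ∑ i, x i := by
  obtain ⟨i, hi⟩ := pos_entry hx
  exact Finset.sum_pos' (fun j _ => hx.1 j) ⟨i, Finset.mem_univ i, hi⟩

lemma add_mem_SS {x y : Fin d → ℝ} (hx : x ∈ SS d) (hy : y ∈ SS d) : x + y ∈ SS d := by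
  refine ⟨fun i => add_nonneg (hx.1 i) (hy.1 i), ?_⟩
  obtain ⟨i, hi⟩ := pos_entry hx
  intro h
  have := congrFun h i
  simp only [Pi.add_apply, Pi.zero_apply] at this
  nlinarith [hy.1 i]

lemma smul_mem_SS {x : Fin d → ℝ} {c : ℝ} (hc : 0 < c) (hx : x ∈ SS d) : c • x ∈ SS d := by
  refine ⟨fun i => mul_nonneg hc.le (hx.1 i), ?_⟩
  intro h
  obtain ⟨i, hi⟩ := pos_entry hx
  have := congrFun h i
  simp only [Pi.smul_apply, smul_eq_mul, Pi.zero_apply] at this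
  nlinarith

lemma convex_SS : Convex ℝ (SS d) := by
  intro x hx y hy a b ha hb hab
  refine ⟨fun i => add_nonneg (mul_nonneg ha (hx.1 i)) (mul_nonneg hb (hy.1 i)), ?_⟩
  rcases eq_or_lt_of_le ha with rfl | ha'
  · have hb1 : b = 1 := by linarith
    subst hb1
    simpa using hy.2
  · intro h
    obtain ⟨i, hi⟩ := pos_entry hx
    have := congrFun h i
    simp only [Pi.add_apply, Pi.smul_apply, smul_eq_mul, Pi.zero_apply] at this
    nlinarith [hy.1 i, mul_nonneg hb (hy.1 i)]

lemma concaveOn_of_superadd (f : (Fin d → ℝ) → ℝ)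
    (hhom : ∀ c, 0 < c → ∀ x ∈ SS d, f (c • x) = c * f x)
    (hsup : ∀ x ∈ SS d, ∀ y ∈ SS d, f x + f y ≤ f (x + y)) :
    ConcaveOn ℝ (SS d) f := by
  refine ⟨convex_SS, ?_⟩
  intro x hx y hy a b ha hb hab
  rcases eq_or_lt_of_le ha with rfl | ha'
  · have hb1 : b = 1 := by linarith
    subst hb1; simp
  rcases eq_or_lt_of_le hb with rfl | hb'
  · have ha1 : a = 1 := by linarith
    subst ha1; simp
  · have h := hsup _ (smul_mem_SS ha' hx) _ (smul_mem_SS hb' hy)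
    rw [hhom a ha' x hx, hhom b hb' y hy] at h
    simpa [smul_eq_mul] using h

lemma convexOn_of_subadd (f : (Fin d → ℝ) → ℝ)
    (hhom : ∀ c, 0 < c → ∀ x ∈ SS d, f (c • x) = c * f x)
    (hsub : ∀ x ∈ SS d, ∀ y ∈ SS d, f (x + y) ≤ f x + f y) :
    ConvexOn ℝ (SS d) f := by
  refine ⟨convex_SS, ?_⟩
  intro x hx y hy a b ha hb hab
  rcases eq_or_lt_of_le ha with rfl | ha'
  · have hb1 : b = 1 := by linarith
    subst hb1; simp
  rcases eq_or_lt_of_le hb with rfl | hb'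
  · have ha1 : a = 1 := by linarith
    subst ha1; simp
  · have h := hsub _ (smul_mem_SS ha' hx) _ (smul_mem_SS hb' hy)
    rw [hhom a ha' x hx, hhom b hb' y hy] at h
    simpa [smul_eq_mul] using h

/-- Superadditivity of the weighted geometric mean. -/
lemma gm_add_le {ι : Type*} (s : Finset ι) (w v v' : ι → ℝ)
    (hw : ∀ i ∈ s, 0 ≤ w i) (hw1 : ∑ i ∈ s, w i = 1)
    (hv : ∀ i ∈ s, 0 < v i) (hv' : ∀ i ∈ s, 0 < v' i) :
    (∏ i ∈ s, v i ^ w i) + ∏ i ∈ s, v' i ^ w i ≤ ∏ i ∈ s, (v i + v' i) ^ w i := by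
  have hvv' : ∀ i ∈ s, 0 < v i + v' i := fun i hi => add_pos (hv i hi) (hv' i hi)
  have hP : 0 ≤ ∏ i ∈ s, (v i + v' i) ^ w i :=
    Finset.prod_nonneg fun i hi => Real.rpow_nonneg (hvv' i hi).le _
  have key : ∀ u : ι → ℝ, (∀ i ∈ s, 0 < u i) →
      ∏ i ∈ s, u i ^ w i ≤
        (∑ i ∈ s, w i * (u i / (v i + v' i))) * ∏ i ∈ s, (v i + v' i) ^ w i := by
    intro u hu
    have hgm := Real.geom_mean_le_arith_mean_weighted s w (fun i => u i / (v i + v' i)) hw hw1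
      (fun i hi => (div_pos (hu i hi) (hvv' i hi)).le)
    calc ∏ i ∈ s, u i ^ w i
        = (∏ i ∈ s, (u i / (v i + v' i)) ^ w i) * ∏ i ∈ s, (v i + v' i) ^ w i := by
          rw [← Finset.prod_mul_distrib]
          refine Finset.prod_congr rfl fun i hi => ?_
          rw [← Real.mul_rpow (div_pos (hu i hi) (hvv' i hi)).le (hvv' i hi).le,
            div_mul_cancel₀ _ (hvv' i hi).ne']
      _ ≤ _ := by
          exact mul_le_mul_of_nonneg_right hgm hP
  have h1 := key v hv
  have h2 := key v' hv'
  have hAB : (∑ i ∈ s, w i * (v i / (v i + v' i))) +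
      (∑ i ∈ s, w i * (v' i / (v i + v' i))) = 1 := by
    rw [← Finset.sum_add_distrib, ← hw1]
    refine Finset.sum_congr rfl fun i hi => ?_
    rw [← mul_add, ← add_div, div_self (hvv' i hi).ne', mul_one]
  have := add_le_add h1 h2
  rwa [← add_mul, hAB, one_mul] at this


def nsum (a : ℝ) (x : Fin d → ℝ) : ℝ := ∑ i, x i ^ a
def nrm (a : ℝ) (x : Fin d → ℝ) : ℝ := nsum a x ^ a⁻¹
def mx (x : Fin d → ℝ) : ℝ := ⨆ i, x i
def n0 (x : Fin d → ℝ) : ℕ := Nat.card {i // 0 < x i}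

lemma nsum_pos {a : ℝ} (ha : 0 < a) {x : Fin d → ℝ} (hx : x ∈ SS d) : 0 < nsum a x := by
  obtain ⟨i, hi⟩ := pos_entry hx
  exact Finset.sum_pos' (fun j _ => Real.rpow_nonneg (hx.1 j) a)
    ⟨i, Finset.mem_univ i, Real.rpow_pos_of_pos hi a⟩

lemma nrm_pos {a : ℝ} (ha : 0 < a) {x : Fin d → ℝ} (hx : x ∈ SS d) : 0 < nrm a x :=
  Real.rpow_pos_of_pos (nsum_pos ha hx) _

lemma nsum_nonneg {a : ℝ} {x : Fin d → ℝ} (hx : ∀ i, 0 ≤ x i) : 0 ≤ nsum a x :=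
  Finset.sum_nonneg fun j _ => Real.rpow_nonneg (hx j) a

lemma nrm_rpow {a : ℝ} (ha : a ≠ 0) {x : Fin d → ℝ} (hx : ∀ i, 0 ≤ x i) :
    nrm a x ^ a = nsum a x := by
  rw [nrm, ← Real.rpow_mul (nsum_nonneg hx), inv_mul_cancel₀ ha, Real.rpow_one]

lemma nrm_superadd {a : ℝ} (ha : 0 < a) (ha1 : a ≤ 1) {x y : Fin d → ℝ}
    (hx : x ∈ SS d) (hy : y ∈ SS d) : nrm a x + nrm a y ≤ nrm a (x + y) := by
  set u := nrm a x with hu'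
  set v := nrm a y with hv'
  have hu : 0 < u := nrm_pos ha hx
  have hv : 0 < v := nrm_pos ha hy
  have huv : 0 < u + v := by linarith
  have hlam : 0 ≤ u / (u + v) := by positivity
  have hmu : 0 ≤ v / (u + v) := by positivity
  have hlammu : u / (u + v) + v / (u + v) = 1 := by field_simp
  have key : (u + v) ^ a ≤ nsum a (x + y) := by
    have hpt : ∀ i, (u + v) ^ a * (u / (u + v) * (x i / u) ^ a + v / (u + v) * (y i / v) ^ a)
        ≤ (x i + y i) ^ a := by
      intro i
      have hxiu : (0:ℝ) ≤ x i / u := div_nonneg (hx.1 i) hu.le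
      have hyiv : (0:ℝ) ≤ y i / v := div_nonneg (hy.1 i) hv.le
      have hconc := (Real.concaveOn_rpow ha.le ha1).2 (Set.mem_Ici.2 hxiu)
        (Set.mem_Ici.2 hyiv) hlam hmu hlammu
      simp only [smul_eq_mul] at hconc
      have heq : (u + v) * (u / (u + v) * (x i / u) + v / (u + v) * (y i / v)) = x i + y i := by
        field_simp
      calc (u + v) ^ a * (u / (u + v) * (x i / u) ^ a + v / (u + v) * (y i / v) ^ a)
          ≤ (u + v) ^ a * (u / (u + v) * (x i / u) + v / (u + v) * (y i / v)) ^ a :=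
            mul_le_mul_of_nonneg_left hconc (Real.rpow_nonneg huv.le a)
        _ = ((u + v) * (u / (u + v) * (x i / u) + v / (u + v) * (y i / v))) ^ a := by
            rw [Real.mul_rpow huv.le (add_nonneg (mul_nonneg hlam hxiu) (mul_nonneg hmu hyiv))]
        _ = (x i + y i) ^ a := by rw [heq]
    have hsum : ∀ z : Fin d → ℝ, (∀ i, 0 ≤ z i) → 0 < nrm a z →
        ∑ i, (z i / nrm a z) ^ a = 1 := by
      intro z hz hnz
      have : ∀ i, (z i / nrm a z) ^ a = z i ^ a / nrm a z ^ a := fun i =>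
        Real.div_rpow (hz i) hnz.le a
      simp only [this, ← Finset.sum_div, nrm_rpow ha.ne' hz]
      exact div_self (by
        have := nrm_rpow ha.ne' hz
        have h2 : 0 < nsum a z := by
          rw [← this]; exact Real.rpow_pos_of_pos hnz a
        exact h2.ne')
    calc (u + v) ^ a = (u + v) ^ a * (u / (u + v) * ∑ i, (x i / u) ^ a
          + v / (u + v) * ∑ i, (y i / v) ^ a) := by
          rw [hsum x hx.1 hu, hsum y hy.1 hv, mul_one, mul_one, hlammu, mul_one]
      _ = ∑ i, (u + v) ^ a * (u / (u + v) * (x i / u) ^ a + v / (u + v) * (y i / v) ^ a) := by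
          rw [Finset.mul_sum, Finset.mul_sum, ← Finset.sum_add_distrib, Finset.mul_sum]
      _ ≤ ∑ i, (x i + y i) ^ a := Finset.sum_le_sum fun i _ => hpt i
      _ = nsum a (x + y) := by simp [nsum]
  calc u + v = ((u + v) ^ a) ^ a⁻¹ := by
        rw [← Real.rpow_mul huv.le, mul_inv_cancel₀ ha.ne', Real.rpow_one]
    _ ≤ nrm a (x + y) :=
        Real.rpow_le_rpow (Real.rpow_nonneg huv.le a) key (by positivity)

lemma nrm_subadd {a : ℝ} (ha : 1 ≤ a) {x y : Fin d → ℝ}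
    (hx : ∀ i, 0 ≤ x i) (hy : ∀ i, 0 ≤ y i) : nrm a (x + y) ≤ nrm a x + nrm a y := by
  have := Real.Lp_add_le_of_nonneg (s := (Finset.univ : Finset (Fin d))) (f := x) (g := y) ha
    (fun i _ => hx i) (fun i _ => hy i)
  simpa [nrm, nsum, one_div] using this

lemma mx_pos {x : Fin d → ℝ} (hx : x ∈ SS d) : 0 < mx x := by
  obtain ⟨i, hi⟩ := pos_entry hx
  exact hi.trans_le (le_ciSup (Set.Finite.bddAbove (Set.finite_range x)) i)

lemma mx_subadd {x y : Fin d → ℝ} (hx : x ∈ SS d) (hy : y ∈ SS d) :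
    mx (x + y) ≤ mx x + mx y := by
  obtain ⟨i₀, _⟩ := pos_entry hx
  have : Nonempty (Fin d) := ⟨i₀⟩
  refine ciSup_le fun i => ?_
  exact add_le_add (le_ciSup (Set.Finite.bddAbove (Set.finite_range x)) i)
    (le_ciSup (Set.Finite.bddAbove (Set.finite_range y)) i)

lemma n0_pos {x : Fin d → ℝ} (hx : x ∈ SS d) : 0 < n0 x := by
  obtain ⟨i, hi⟩ := pos_entry hx
  have : Nonempty {i // 0 < x i} := ⟨⟨i, hi⟩⟩
  rw [n0, Nat.card_eq_fintype_card]
  exact Fintype.card_pos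

lemma n0_mono {x y : Fin d → ℝ} (hy : ∀ i, 0 ≤ y i) : n0 x ≤ n0 (x + y) := by
  classical
  simp only [n0, Nat.card_eq_fintype_card]
  exact Fintype.card_subtype_mono _ _ fun i hi => by
    have := hy i
    simp only [Pi.add_apply]
    nlinarith


lemma iSup_div_const {x : Fin d → ℝ} (hx : x ∈ SS d) {s : ℝ} (hs : 0 < s) :
    ⨆ i, x i / s = (⨆ i, x i) / s := by
  obtain ⟨i₀, _⟩ := pos_entry hx
  have : Nonempty (Fin d) := ⟨i₀⟩
  apply le_antisymm
  · refine ciSup_le fun i => ?_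
    have hle : x i ≤ ⨆ j, x j := le_ciSup (Set.Finite.bddAbove (Set.finite_range x)) i
    gcongr
  · rw [div_le_iff₀ hs]
    refine ciSup_le fun i => ?_
    rw [← div_le_iff₀ hs]
    exact le_ciSup (Set.Finite.bddAbove (Set.finite_range fun j => x j / s)) i

def BB (α : ℝ≥0∞) (x : Fin d → ℝ) : ℝ :=
  if α = 0 then ∑ i, x i else if α = ⊤ then mx x else nrm α.toReal x

def DD (α : ℝ≥0∞) (x : Fin d → ℝ) (e : ℝ) : ℝ := if α = 0 then (n0 x : ℝ) ^ e else 1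

lemma BB_pos {α : ℝ≥0∞} {x : Fin d → ℝ} (hx : x ∈ SS d) : 0 < BB α x := by
  unfold BB
  split_ifs with h0 htop
  · exact sum_pos' hx
  · exact mx_pos hx
  · exact nrm_pos (ENNReal.toReal_pos h0 htop) hx

lemma DD_pos {α : ℝ≥0∞} {x : Fin d → ℝ} (hx : x ∈ SS d) (e : ℝ) : 0 < DD α x e := by
  unfold DD
  split_ifs with h0
  · exact Real.rpow_pos_of_pos (by exact_mod_cast n0_pos hx) e
  · norm_num

lemma factor_eq {α : ℝ≥0∞} (hα : α ≠ 1) {x : Fin d → ℝ} (hx : x ∈ SS d) (c : ℝ) :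
    exp2 (c * renyi α (fun i => x i / ∑ j, x j)) =
      DD α x c * (BB α x / ∑ i, x i) ^ (c * aRatio α) := by
  have hs : 0 < ∑ i, x i := sum_pos' hx
  by_cases h0 : α = 0
  · subst h0
    have hcard : Nat.card {i : Fin d // 0 < x i / ∑ j, x j} = n0 x := by
      apply Nat.card_congr
      apply Equiv.subtypeEquivRight
      intro i
      constructor
      · intro h
        have := mul_pos h hs
        rwa [div_mul_cancel₀ _ hs.ne'] at this
      · intro h; exact div_pos h hs
    have hn0 : (0:ℝ) < (n0 x : ℝ) := by exact_mod_cast n0_pos hx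
    have hren : renyi 0 (fun i => x i / ∑ j, x j) = log2 (n0 x) := by
      simp only [renyi, if_true]
      rw [hcard]
    have har : aRatio 0 = 0 := by simp [aRatio]
    rw [hren, exp2_mul_log2 hn0 c, har, mul_zero, Real.rpow_zero, mul_one, DD, if_pos rfl]
  by_cases htop : α = ⊤
  · subst htop
    have hmx : 0 < mx x := mx_pos hx
    have hsup : (⨆ i, x i / ∑ j, x j) = mx x / ∑ i, x i := iSup_div_const hx hs
    have hren : renyi ⊤ (fun i => x i / ∑ j, x j) = -log2 (mx x / ∑ i, x i) := by
      simp only [renyi, if_neg (by simp : (⊤:ℝ≥0∞) ≠ 0), if_neg hα, if_true]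
      rw [hsup]
    have hpos : 0 < mx x / ∑ i, x i := div_pos hmx hs
    rw [hren, show c * -log2 (mx x / ∑ i, x i) = (c * (-1)) * log2 (mx x / ∑ i, x i) by ring,
      exp2_mul_log2 hpos]
    have harr : aRatio ⊤ = -1 := by simp [aRatio]
    rw [harr, DD, if_neg h0, BB, if_neg h0, if_pos rfl, one_mul]
  · have ha : 0 < α.toReal := ENNReal.toReal_pos h0 htop
    set a := α.toReal with ha'
    have hnrm : 0 < nrm a x := nrm_pos ha hx
    have hnsum : 0 < nsum a x := nsum_pos ha hx
    have hdivsum : (∑ i : Fin d, (x i / ∑ j, x j) ^ a) = nsum a x / (∑ i, x i) ^ a := by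
      have he : ∀ i : Fin d, (x i / ∑ j, x j) ^ a = x i ^ a / (∑ j, x j) ^ a :=
        fun i => Real.div_rpow (hx.1 i) hs.le a
      rw [Finset.sum_congr rfl fun i _ => he i, ← Finset.sum_div]
      rfl
    have h1 : log2 (nsum a x / (∑ i, x i) ^ a) = a * log2 (nrm a x / ∑ i, x i) := by
      unfold log2
      rw [Real.logb_div hnsum.ne' (Real.rpow_pos_of_pos hs a).ne',
        ← nrm_rpow ha.ne' hx.1, Real.logb_rpow_eq_mul_logb_of_pos hnrm,
        Real.logb_rpow_eq_mul_logb_of_pos hs,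
        Real.logb_div hnrm.ne' hs.ne']
      ring
    have hpos : 0 < nrm a x / ∑ i, x i := div_pos hnrm hs
    have hren : renyi α (fun i => x i / ∑ j, x j)
        = (1 - a)⁻¹ * log2 (nsum a x / (∑ i, x i) ^ a) := by
      simp only [renyi, if_neg h0, if_neg hα, if_neg htop]
      rw [hdivsum]
    rw [hren, h1,
      show c * ((1 - a)⁻¹ * (a * log2 (nrm a x / ∑ i, x i)))
        = (c * (a / (1 - a))) * log2 (nrm a x / ∑ i, x i) by ring,
      exp2_mul_log2 hpos]
    rw [DD, if_neg h0, BB, if_neg h0, if_neg htop, one_mul, aRatio, if_neg htop]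


lemma prod_rpow_pos {ι : Type*} (s : Finset ι) {V : ι → ℝ} (hV : ∀ i ∈ s, 0 < V i)
    (e : ι → ℝ) : 0 < ∏ i ∈ s, V i ^ e i :=
  Finset.prod_pos fun i hi => Real.rpow_pos_of_pos (hV i hi) _

/-- Identity rewriting the objective into homogeneous factors. -/
lemma f_eq {N : ℕ} (αs : Fin N → ℝ≥0∞) (τs : Fin N → ℝ) (t : ℝ)
    (hα1 : ∀ ℓ, αs ℓ ≠ 1) {x : Fin d → ℝ} (hx : x ∈ SS d) :
    (∑ i, x i) * exp2 (t * ∑ ℓ, τs ℓ * renyi (αs ℓ) (fun i => x i / ∑ j, x j)) =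
      (∏ ℓ, DD (αs ℓ) x (t * τs ℓ)) *
        ((∑ i, x i) ^ (1 - ∑ ℓ, t * τs ℓ * aRatio (αs ℓ)) *
          ∏ ℓ, BB (αs ℓ) x ^ (t * τs ℓ * aRatio (αs ℓ))) := by
  have hs : 0 < ∑ i, x i := sum_pos' hx
  have h1 : t * ∑ ℓ, τs ℓ * renyi (αs ℓ) (fun i => x i / ∑ j, x j)
      = ∑ ℓ, (t * τs ℓ) * renyi (αs ℓ) (fun i => x i / ∑ j, x j) := by
    rw [Finset.mul_sum]
    exact Finset.sum_congr rfl fun ℓ _ => by ring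
  rw [h1, exp2_sum]
  have h2 : ∀ ℓ : Fin N, exp2 ((t * τs ℓ) * renyi (αs ℓ) (fun i => x i / ∑ j, x j))
      = DD (αs ℓ) x (t * τs ℓ) * (BB (αs ℓ) x ^ (t * τs ℓ * aRatio (αs ℓ)) /
          (∑ i, x i) ^ (t * τs ℓ * aRatio (αs ℓ))) := by
    intro ℓ
    rw [factor_eq (hα1 ℓ) hx (t * τs ℓ),
      Real.div_rpow (BB_pos hx).le hs.le]
  rw [Finset.prod_congr rfl fun ℓ _ => h2 ℓ, Finset.prod_mul_distrib,
    Finset.prod_div_distrib, ← Real.rpow_sum_of_pos hs]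
  rw [Real.rpow_sub hs, Real.rpow_one]
  ring

/-- Homogeneity of the objective. -/
lemma f_homog {N : ℕ} (αs : Fin N → ℝ≥0∞) (τs : Fin N → ℝ) (t : ℝ) :
    ∀ c : ℝ, 0 < c → ∀ x ∈ SS d,
      (∑ i, (c • x) i) * exp2 (t * ∑ ℓ, τs ℓ * renyi (αs ℓ) (fun i => (c • x) i / ∑ j, (c • x) j)) =
      c * ((∑ i, x i) * exp2 (t * ∑ ℓ, τs ℓ * renyi (αs ℓ) (fun i => x i / ∑ j, x j))) := by
  intro c hc x hx
  have hk : (fun i => (c • x) i / ∑ j, (c • x) j) = fun i => x i / ∑ j, x j := by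
    funext i
    simp only [Pi.smul_apply, smul_eq_mul, ← Finset.mul_sum]
    rw [mul_div_mul_left _ _ hc.ne']
  rw [hk]
  simp only [Pi.smul_apply, smul_eq_mul, ← Finset.mul_sum]
  ring

/-- A Radon/Hölder-type inequality: subadditivity of `M^(1+Q) ∏ V_i^{-u_i}`. -/
lemma gm_radon {ι : Type*} (s : Finset ι) (u : ι → ℝ) (hu : ∀ i ∈ s, 0 ≤ u i)
    {V V' : ι → ℝ} (hV : ∀ i ∈ s, 0 < V i) (hV' : ∀ i ∈ s, 0 < V' i)
    {M M' : ℝ} (hM : 0 < M) (hM' : 0 < M') :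
    (M + M') ^ (1 + ∑ i ∈ s, u i) * ∏ i ∈ s, (V i + V' i) ^ (-u i) ≤
      M ^ (1 + ∑ i ∈ s, u i) * ∏ i ∈ s, V i ^ (-u i) +
      M' ^ (1 + ∑ i ∈ s, u i) * ∏ i ∈ s, V' i ^ (-u i) := by
  classical
  set Q := ∑ i ∈ s, u i with hQdef
  have hQ0 : 0 ≤ Q := Finset.sum_nonneg hu
  have hQ1 : (0:ℝ) < 1 + Q := by linarith
  set c := (1 + Q)⁻¹ with hcdef
  have hc0 : 0 < c := by positivity
  have hc1 : (1 + Q) * c = 1 := mul_inv_cancel₀ hQ1.ne'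
  have key : ∀ (MM : ℝ), 0 < MM → ∀ (VV : ι → ℝ), (∀ i ∈ s, 0 < VV i) →
      (MM ^ (1 + Q) * ∏ i ∈ s, VV i ^ (-u i)) ^ c * ∏ i ∈ s, VV i ^ (u i * c) = MM := by
    intro MM hMM VV hVV
    have e1 : (MM ^ (1 + Q) * ∏ i ∈ s, VV i ^ (-u i)) ^ c
        = MM * ∏ i ∈ s, VV i ^ (-u i * c) := by
      rw [Real.mul_rpow (Real.rpow_nonneg hMM.le _)
        (Finset.prod_nonneg fun i hi => Real.rpow_nonneg (hVV i hi).le _),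
        ← Real.rpow_mul hMM.le, hc1, Real.rpow_one,
        ← Real.finset_prod_rpow s _ (fun i hi => Real.rpow_nonneg (hVV i hi).le _) c]
      congr 1
      refine Finset.prod_congr rfl fun i hi => ?_
      rw [← Real.rpow_mul (hVV i hi).le]
    rw [e1, mul_assoc, ← Finset.prod_mul_distrib]
    have e2 : ∀ i ∈ s, VV i ^ (-u i * c) * VV i ^ (u i * c) = 1 := by
      intro i hi
      rw [← Real.rpow_add (hVV i hi), neg_mul, neg_add_cancel, Real.rpow_zero]
    rw [Finset.prod_congr rfl e2, Finset.prod_const_one, mul_one]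
  -- apply the GM superadditivity over `Option ι`
  set s' : Finset (Option ι) := insert none (s.map Function.Embedding.some) with hs'def
  have hnone : (none : Option ι) ∉ s.map Function.Embedding.some := by simp
  set F := M ^ (1 + Q) * ∏ i ∈ s, V i ^ (-u i) with hFdef
  set F' := M' ^ (1 + Q) * ∏ i ∈ s, V' i ^ (-u i) with hF'def
  have hFpos : 0 < F := mul_pos (Real.rpow_pos_of_pos hM _) (prod_rpow_pos s hV _)
  have hF'pos : 0 < F' := mul_pos (Real.rpow_pos_of_pos hM' _) (prod_rpow_pos s hV' _)
  set w : Option ι → ℝ := fun o => o.elim c (fun i => u i * c) with hwdef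
  set vv : Option ι → ℝ := fun o => o.elim F (fun i => V i) with hvvdef
  set vv' : Option ι → ℝ := fun o => o.elim F' (fun i => V' i) with hvv'def
  have hwsum : ∑ o ∈ s', w o = 1 := by
    rw [hs'def, Finset.sum_insert hnone, Finset.sum_map]
    simp only [Function.Embedding.some_apply, hwdef, Option.elim]
    rw [← Finset.sum_mul, ← hQdef]
    rw [hcdef]
    field_simp
  have hgm := gm_add_le s' w vv vv'
    (by
      intro o ho
      rcases o with _ | i
      · exact hc0.le
      · have hi : i ∈ s := by
          rw [hs'def] at ho
          simp at ho
          exact ho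
        exact mul_nonneg (hu i hi) hc0.le)
    hwsum
    (by
      intro o ho
      rcases o with _ | i
      · exact hFpos
      · have hi : i ∈ s := by rw [hs'def] at ho; simp at ho; exact ho
        exact hV i hi)
    (by
      intro o ho
      rcases o with _ | i
      · exact hF'pos
      · have hi : i ∈ s := by rw [hs'def] at ho; simp at ho; exact ho
        exact hV' i hi)
  have hexp : ∀ (A : ℝ) (W : ι → ℝ), ∏ o ∈ s', (o.elim A W) ^ w o
      = A ^ c * ∏ i ∈ s, W i ^ (u i * c) := by
    intro A W
    rw [hs'def, Finset.prod_insert hnone, Finset.prod_map]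
    simp only [Function.Embedding.some_apply, hwdef, Option.elim]
  have hgm2 : M + M' ≤ (F + F') ^ c * ∏ i ∈ s, (V i + V' i) ^ (u i * c) := by
    have hL : ∏ o ∈ s', vv o ^ w o = M := by
      rw [hvvdef, hexp F V, hFdef]
      exact key M hM V hV
    have hL' : ∏ o ∈ s', vv' o ^ w o = M' := by
      rw [hvv'def, hexp F' V', hF'def]
      exact key M' hM' V' hV'
    have hR : ∏ o ∈ s', (vv o + vv' o) ^ w o
        = (F + F') ^ c * ∏ i ∈ s, (V i + V' i) ^ (u i * c) := by
      have : (fun o => (vv o + vv' o)) = fun o => Option.elim o (F + F') (fun i => V i + V' i) := by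
        funext o; rcases o with _ | i <;> simp [hvvdef, hvv'def]
      calc ∏ o ∈ s', (vv o + vv' o) ^ w o
          = ∏ o ∈ s', (Option.elim o (F + F') (fun i => V i + V' i)) ^ w o := by
            refine Finset.prod_congr rfl fun o _ => ?_
            rw [congrFun this o]
        _ = _ := hexp (F + F') (fun i => V i + V' i)
    rw [← hL, ← hL', ← hR]
    exact hgm
  have hMM' : (0:ℝ) < M + M' := by linarith
  have hstep : (M + M') ^ (1 + Q) ≤ (F + F') * ∏ i ∈ s, (V i + V' i) ^ (u i) := by
    have := Real.rpow_le_rpow hMM'.le hgm2 hQ1.le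
    rw [Real.mul_rpow (Real.rpow_nonneg (by linarith : (0:ℝ) ≤ F + F') _)
      (Finset.prod_nonneg fun i hi => Real.rpow_nonneg (add_pos (hV i hi) (hV' i hi)).le _),
      ← Real.rpow_mul (by linarith : (0:ℝ) ≤ F + F'), mul_comm c (1+Q), hc1, Real.rpow_one,
      ← Real.finset_prod_rpow s _ (fun i hi => Real.rpow_nonneg (add_pos (hV i hi) (hV' i hi)).le _) (1+Q)] at this
    calc (M + M') ^ (1 + Q) ≤ (F + F') * ∏ i ∈ s, ((V i + V' i) ^ (u i * c)) ^ (1+Q) := this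
      _ = (F + F') * ∏ i ∈ s, (V i + V' i) ^ (u i) := by
          congr 1
          refine Finset.prod_congr rfl fun i hi => ?_
          rw [← Real.rpow_mul (add_pos (hV i hi) (hV' i hi)).le, mul_assoc, mul_comm c (1+Q), hc1, mul_one]
  have hPpos : 0 < ∏ i ∈ s, (V i + V' i) ^ (-u i) :=
    prod_rpow_pos s (fun i hi => add_pos (hV i hi) (hV' i hi)) _
  have hfin := mul_le_mul_of_nonneg_right hstep hPpos.le
  have hcancel : (∏ i ∈ s, (V i + V' i) ^ (u i)) * ∏ i ∈ s, (V i + V' i) ^ (-u i) = 1 := by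
    rw [← Finset.prod_mul_distrib]
    have : ∀ i ∈ s, (V i + V' i) ^ (u i) * (V i + V' i) ^ (-u i) = 1 := by
      intro i hi
      rw [← Real.rpow_add (add_pos (hV i hi) (hV' i hi)), add_neg_cancel, Real.rpow_zero]
    rw [Finset.prod_congr rfl this, Finset.prod_const_one]
  calc (M + M') ^ (1 + Q) * ∏ i ∈ s, (V i + V' i) ^ (-u i)
      ≤ (F + F') * (∏ i ∈ s, (V i + V' i) ^ (u i)) * ∏ i ∈ s, (V i + V' i) ^ (-u i) := by
        calc (M + M') ^ (1 + Q) * ∏ i ∈ s, (V i + V' i) ^ (-u i)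
            ≤ ((F + F') * ∏ i ∈ s, (V i + V' i) ^ (u i)) * ∏ i ∈ s, (V i + V' i) ^ (-u i) := hfin
          _ = _ := by ring
    _ = F + F' := by rw [mul_assoc, hcancel, mul_one]


lemma toReal_lt_one' {α : ℝ≥0∞} (hα : α < 1) : α.toReal < 1 := by
  have htop : α ≠ ⊤ := ne_top_of_lt hα
  have := (ENNReal.toReal_lt_toReal htop (by simp : (1:ℝ≥0∞) ≠ ⊤)).2 hα
  simpa using this

lemma one_lt_toReal' {α : ℝ≥0∞} (hα : 1 < α) (htop : α ≠ ⊤) : 1 < α.toReal := by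
  have := (ENNReal.toReal_lt_toReal (by simp : (1:ℝ≥0∞) ≠ ⊤) htop).2 hα
  simpa using this

lemma aRatio_nonneg {α : ℝ≥0∞} (hα : α < 1) : 0 ≤ aRatio α := by
  unfold aRatio
  rw [if_neg (ne_top_of_lt hα)]
  exact div_nonneg ENNReal.toReal_nonneg (by linarith [toReal_lt_one' hα])

lemma aRatio_nonpos {α : ℝ≥0∞} (hα : 1 < α) : aRatio α ≤ 0 := by
  unfold aRatio
  split_ifs with htop
  · norm_num
  · have h1 : 1 < α.toReal := one_lt_toReal' hα htop
    apply div_nonpos_of_nonneg_of_nonpos ENNReal.toReal_nonneg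
    linarith

lemma sum_add_apply {x y : Fin d → ℝ} : (∑ i, (x + y) i) = ∑ i, x i + ∑ i, y i := by
  simp only [Pi.add_apply]
  exact Finset.sum_add_distrib

lemma BB_superadd {α : ℝ≥0∞} (hα : α < 1) {x y : Fin d → ℝ}
    (hx : x ∈ SS d) (hy : y ∈ SS d) : BB α x + BB α y ≤ BB α (x + y) := by
  have htop : α ≠ ⊤ := ne_top_of_lt hα
  by_cases h0 : α = 0
  · simp only [BB, if_pos h0]
    exact le_of_eq sum_add_apply.symm
  · simp only [BB, if_neg h0, if_neg htop]
    exact nrm_superadd (ENNReal.toReal_pos h0 htop) (toReal_lt_one' hα).le hx hy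

lemma BB_subadd_last {α : ℝ≥0∞} (hα : 1 < α) {x y : Fin d → ℝ}
    (hx : x ∈ SS d) (hy : y ∈ SS d) : BB α (x + y) ≤ BB α x + BB α y := by
  have h0 : α ≠ 0 := by
    intro h; subst h; exact absurd hα (by simp)
  by_cases htop : α = ⊤
  · subst htop
    simp only [BB, if_neg h0, if_pos rfl]
    exact mx_subadd hx hy
  · simp only [BB, if_neg h0, if_neg htop]
    exact nrm_subadd (one_lt_toReal' hα htop).le hx.1 hy.1

lemma DD_le_DD_add {α : ℝ≥0∞} {x y : Fin d → ℝ} (hy : ∀ i, 0 ≤ y i) {e : ℝ} (he : 0 ≤ e) :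
    DD α x e ≤ DD α (x + y) e := by
  unfold DD
  split_ifs with h0
  · exact Real.rpow_le_rpow (Nat.cast_nonneg _) (Nat.cast_le.2 (n0_mono hy)) he
  · exact le_refl _

lemma DD_add_le_DD {α : ℝ≥0∞} {x y : Fin d → ℝ} (hx : x ∈ SS d) (hy : ∀ i, 0 ≤ y i)
    {e : ℝ} (he : e ≤ 0) : DD α (x + y) e ≤ DD α x e := by
  unfold DD
  split_ifs with h0
  · refine Real.antitoneOn_rpow_Ioi_of_exponent_nonpos he
      (Set.mem_Ioi.2 (by exact_mod_cast n0_pos hx))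
      (Set.mem_Ioi.2 (by exact_mod_cast (n0_pos hx).trans_le (n0_mono hy)))
      (by exact_mod_cast n0_mono hy)
  · exact le_refl _

/-- Generic superadditivity core for the concave case. -/
lemma core_superadd {N : ℕ} (αs : Fin N → ℝ≥0∞) (w e : Fin N → ℝ)
    (hw0 : ∀ ℓ, 0 ≤ w ℓ) (hW : ∑ ℓ, w ℓ ≤ 1) (he : ∀ ℓ, 0 ≤ e ℓ)
    (hα : ∀ ℓ, αs ℓ < 1) {x y : Fin d → ℝ} (hx : x ∈ SS d) (hy : y ∈ SS d) :
    (∏ ℓ, DD (αs ℓ) x (e ℓ)) * ((∑ i, x i) ^ (1 - ∑ ℓ, w ℓ) * ∏ ℓ, BB (αs ℓ) x ^ w ℓ) +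
    (∏ ℓ, DD (αs ℓ) y (e ℓ)) * ((∑ i, y i) ^ (1 - ∑ ℓ, w ℓ) * ∏ ℓ, BB (αs ℓ) y ^ w ℓ) ≤
    (∏ ℓ, DD (αs ℓ) (x + y) (e ℓ)) *
      ((∑ i, (x + y) i) ^ (1 - ∑ ℓ, w ℓ) * ∏ ℓ, BB (αs ℓ) (x + y) ^ w ℓ) := by
  classical
  have hxy := add_mem_SS hx hy
  have hθ0 : 0 ≤ 1 - ∑ ℓ, w ℓ := by linarith
  have hGxpos : 0 < (∑ i, x i) ^ (1 - ∑ ℓ, w ℓ) * ∏ ℓ, BB (αs ℓ) x ^ w ℓ :=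
    mul_pos (Real.rpow_pos_of_pos (sum_pos' hx) _)
      (Finset.prod_pos fun ℓ _ => Real.rpow_pos_of_pos (BB_pos hx) _)
  have hGypos : 0 < (∑ i, y i) ^ (1 - ∑ ℓ, w ℓ) * ∏ ℓ, BB (αs ℓ) y ^ w ℓ :=
    mul_pos (Real.rpow_pos_of_pos (sum_pos' hy) _)
      (Finset.prod_pos fun ℓ _ => Real.rpow_pos_of_pos (BB_pos hy) _)
  have hDxy_pos : 0 < ∏ ℓ, DD (αs ℓ) (x + y) (e ℓ) :=
    Finset.prod_pos fun ℓ _ => DD_pos hxy _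
  have hDx : (∏ ℓ, DD (αs ℓ) x (e ℓ)) ≤ ∏ ℓ, DD (αs ℓ) (x + y) (e ℓ) :=
    Finset.prod_le_prod (fun ℓ _ => (DD_pos hx _).le)
      (fun ℓ _ => DD_le_DD_add hy.1 (he ℓ))
  have hDy : (∏ ℓ, DD (αs ℓ) y (e ℓ)) ≤ ∏ ℓ, DD (αs ℓ) (x + y) (e ℓ) := by
    rw [show x + y = y + x from add_comm x y]
    exact Finset.prod_le_prod (fun ℓ _ => (DD_pos hy _).le)
      (fun ℓ _ => DD_le_DD_add hx.1 (he ℓ))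
  have hG : (∑ i, x i) ^ (1 - ∑ ℓ, w ℓ) * ∏ ℓ, BB (αs ℓ) x ^ w ℓ
      + (∑ i, y i) ^ (1 - ∑ ℓ, w ℓ) * ∏ ℓ, BB (αs ℓ) y ^ w ℓ
      ≤ (∑ i, (x + y) i) ^ (1 - ∑ ℓ, w ℓ) * ∏ ℓ, BB (αs ℓ) (x + y) ^ w ℓ := by
    have hprod : ∀ z : Fin d → ℝ,
        (∏ o : Option (Fin N),
          (Option.elim o (∑ i, z i) (fun ℓ => BB (αs ℓ) z)) ^ (Option.elim o (1 - ∑ ℓ, w ℓ) w))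
          = (∑ i, z i) ^ (1 - ∑ ℓ, w ℓ) * ∏ ℓ, BB (αs ℓ) z ^ w ℓ := by
      intro z
      rw [Fintype.prod_option]
      simp only [Option.elim_none, Option.elim_some]
    have hgm := gm_add_le (Finset.univ : Finset (Option (Fin N)))
      (fun o => Option.elim o (1 - ∑ ℓ, w ℓ) w)
      (fun o => Option.elim o (∑ i, x i) (fun ℓ => BB (αs ℓ) x))
      (fun o => Option.elim o (∑ i, y i) (fun ℓ => BB (αs ℓ) y))
      (by rintro (_ | ℓ) _
          · exact hθ0
          · exact hw0 ℓ)
      (by rw [Fintype.sum_option]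
          simp only [Option.elim]
          ring)
      (by rintro (_ | ℓ) _
          · exact sum_pos' hx
          · exact BB_pos hx)
      (by rintro (_ | ℓ) _
          · exact sum_pos' hy
          · exact BB_pos hy)
    rw [hprod x, hprod y] at hgm
    refine le_trans hgm ?_
    rw [← hprod (x + y)]
    refine Finset.prod_le_prod (fun o _ => ?_) (fun o _ => ?_)
    · rcases o with _ | ℓ
      · exact Real.rpow_nonneg (add_pos (sum_pos' hx) (sum_pos' hy)).le _
      · exact Real.rpow_nonneg (add_pos (BB_pos hx) (BB_pos hy)).le _
    · rcases o with _ | ℓ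
      · simp only [Option.elim]
        exact Real.rpow_le_rpow (add_pos (sum_pos' hx) (sum_pos' hy)).le
          (le_of_eq sum_add_apply.symm) hθ0
      · simp only [Option.elim]
        exact Real.rpow_le_rpow (add_pos (BB_pos hx) (BB_pos hy)).le
          (BB_superadd (hα ℓ) hx hy) (hw0 ℓ)
  calc (∏ ℓ, DD (αs ℓ) x (e ℓ)) * ((∑ i, x i) ^ (1 - ∑ ℓ, w ℓ) * ∏ ℓ, BB (αs ℓ) x ^ w ℓ) +
      (∏ ℓ, DD (αs ℓ) y (e ℓ)) * ((∑ i, y i) ^ (1 - ∑ ℓ, w ℓ) * ∏ ℓ, BB (αs ℓ) y ^ w ℓ)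
      ≤ (∏ ℓ, DD (αs ℓ) (x + y) (e ℓ)) *
          ((∑ i, x i) ^ (1 - ∑ ℓ, w ℓ) * ∏ ℓ, BB (αs ℓ) x ^ w ℓ) +
        (∏ ℓ, DD (αs ℓ) (x + y) (e ℓ)) *
          ((∑ i, y i) ^ (1 - ∑ ℓ, w ℓ) * ∏ ℓ, BB (αs ℓ) y ^ w ℓ) :=
        add_le_add (mul_le_mul_of_nonneg_right hDx hGxpos.le)
          (mul_le_mul_of_nonneg_right hDy hGypos.le)
    _ = (∏ ℓ, DD (αs ℓ) (x + y) (e ℓ)) *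
          ((∑ i, x i) ^ (1 - ∑ ℓ, w ℓ) * ∏ ℓ, BB (αs ℓ) x ^ w ℓ +
           (∑ i, y i) ^ (1 - ∑ ℓ, w ℓ) * ∏ ℓ, BB (αs ℓ) y ^ w ℓ) := by ring
    _ ≤ _ := mul_le_mul_of_nonneg_left hG hDxy_pos.le

lemma superadd_concave {N : ℕ} (αs : Fin N → ℝ≥0∞) (τs : Fin N → ℝ)
    (hτpos : ∀ ℓ, 0 < τs ℓ) {t : ℝ} (ht : 0 < t) (hα : ∀ ℓ, αs ℓ < 1)
    (hsum : ∑ ℓ, τs ℓ * aRatio (αs ℓ) ≤ 1 / t) (x : Fin d → ℝ) (hx : x ∈ SS d)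
    (y : Fin d → ℝ) (hy : y ∈ SS d) :
    (∑ i, x i) * exp2 (t * ∑ ℓ, τs ℓ * renyi (αs ℓ) (fun i => x i / ∑ j, x j)) +
    (∑ i, y i) * exp2 (t * ∑ ℓ, τs ℓ * renyi (αs ℓ) (fun i => y i / ∑ j, y j)) ≤
    (∑ i, (x + y) i) *
      exp2 (t * ∑ ℓ, τs ℓ * renyi (αs ℓ) (fun i => (x + y) i / ∑ j, (x + y) j)) := by
  have hα1 : ∀ ℓ, αs ℓ ≠ 1 := fun ℓ => (hα ℓ).ne
  have hxy := add_mem_SS hx hy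
  rw [f_eq αs τs t hα1 hx, f_eq αs τs t hα1 hy, f_eq αs τs t hα1 hxy]
  have hW : ∑ ℓ, t * τs ℓ * aRatio (αs ℓ) ≤ 1 := by
    have h2 := mul_le_mul_of_nonneg_left hsum ht.le
    rw [mul_one_div, div_self ht.ne'] at h2
    calc ∑ ℓ, t * τs ℓ * aRatio (αs ℓ) = t * ∑ ℓ, τs ℓ * aRatio (αs ℓ) := by
          rw [Finset.mul_sum]; exact Finset.sum_congr rfl fun ℓ _ => by ring
      _ ≤ 1 := h2
  exact core_superadd αs (fun ℓ => t * τs ℓ * aRatio (αs ℓ)) (fun ℓ => t * τs ℓ)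
    (fun ℓ => mul_nonneg (mul_nonneg ht.le (hτpos ℓ).le) (aRatio_nonneg (hα ℓ)))
    hW (fun ℓ => (mul_pos ht (hτpos ℓ)).le) hα hx hy


/-- Generic subadditivity core for the convex case (b). -/
lemma core_subadd {N : ℕ} (αs : Fin N → ℝ≥0∞) (w e : Fin N → ℝ) (last : Fin N)
    (hwle : ∀ ℓ, ℓ ≠ last → w ℓ ≤ 0) (hW : 1 ≤ ∑ ℓ, w ℓ) (he : ∀ ℓ, e ℓ ≤ 0)
    (hαlt : ∀ ℓ, ℓ ≠ last → αs ℓ < 1) (hαlast : 1 < αs last)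
    {x y : Fin d → ℝ} (hx : x ∈ SS d) (hy : y ∈ SS d) :
    (∏ ℓ, DD (αs ℓ) (x + y) (e ℓ)) *
      ((∑ i, (x + y) i) ^ (1 - ∑ ℓ, w ℓ) * ∏ ℓ, BB (αs ℓ) (x + y) ^ w ℓ) ≤
    (∏ ℓ, DD (αs ℓ) x (e ℓ)) * ((∑ i, x i) ^ (1 - ∑ ℓ, w ℓ) * ∏ ℓ, BB (αs ℓ) x ^ w ℓ) +
    (∏ ℓ, DD (αs ℓ) y (e ℓ)) * ((∑ i, y i) ^ (1 - ∑ ℓ, w ℓ) * ∏ ℓ, BB (αs ℓ) y ^ w ℓ) := by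
  classical
  have hxy := add_mem_SS hx hy
  set sfin : Finset (Option (Fin N)) :=
    insert none ((Finset.univ.erase last).map Function.Embedding.some) with hsfin
  have hnone : (none : Option (Fin N)) ∉ (Finset.univ.erase last).map Function.Embedding.some := by
    simp
  set u : Option (Fin N) → ℝ := fun o => o.elim ((∑ ℓ, w ℓ) - 1) (fun ℓ => -w ℓ) with hu
  have husum : ∑ o ∈ sfin, u o = ((∑ ℓ, w ℓ) - 1) + ∑ ℓ ∈ Finset.univ.erase last, (-w ℓ) := by
    rw [hsfin, Finset.sum_insert hnone, Finset.sum_map]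
    simp only [Function.Embedding.some_apply, hu, Option.elim_none, Option.elim_some]
  have hwlast : w last = 1 + ∑ o ∈ sfin, u o := by
    have hsplit : w last + ∑ ℓ ∈ Finset.univ.erase last, w ℓ = ∑ ℓ, w ℓ :=
      Finset.add_sum_erase Finset.univ w (Finset.mem_univ last)
    have hneg : ∑ ℓ ∈ Finset.univ.erase last, (-w ℓ) = -∑ ℓ ∈ Finset.univ.erase last, w ℓ := by
      simp [Finset.sum_neg_distrib]
    rw [husum, hneg]
    linarith
  have huge : ∀ o ∈ sfin, 0 ≤ u o := by
    rintro (_ | ℓ) ho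
    · simp only [hu, Option.elim_none]; linarith
    · have hℓ : ℓ ≠ last := by
        rw [hsfin] at ho
        simp only [Finset.mem_insert, Finset.mem_map, Function.Embedding.some_apply] at ho
        rcases ho with h | ⟨m, hm, hmeq⟩
        · exact absurd h (by simp)
        · have : m = ℓ := by injection hmeq
          subst this
          exact (Finset.mem_erase.1 hm).1
      simp only [hu, Option.elim_some]
      linarith [hwle ℓ hℓ]
  have hQ0 : 0 ≤ ∑ o ∈ sfin, u o := Finset.sum_nonneg huge
  -- identity
  have hGeq : ∀ z : Fin d → ℝ, z ∈ SS d →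
      (∑ i, z i) ^ (1 - ∑ ℓ, w ℓ) * ∏ ℓ, BB (αs ℓ) z ^ w ℓ =
        BB (αs last) z ^ (1 + ∑ o ∈ sfin, u o) *
          ∏ o ∈ sfin, (Option.elim o (∑ i, z i) (fun ℓ => BB (αs ℓ) z)) ^ (-u o) := by
    intro z hz
    have hsplit : ∏ ℓ, BB (αs ℓ) z ^ w ℓ
        = BB (αs last) z ^ w last * ∏ ℓ ∈ Finset.univ.erase last, BB (αs ℓ) z ^ w ℓ :=
      (Finset.mul_prod_erase Finset.univ _ (Finset.mem_univ last)).symm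
    have hprod : ∏ o ∈ sfin, (Option.elim o (∑ i, z i) (fun ℓ => BB (αs ℓ) z)) ^ (-u o)
        = (∑ i, z i) ^ (1 - ∑ ℓ, w ℓ) * ∏ ℓ ∈ Finset.univ.erase last, BB (αs ℓ) z ^ w ℓ := by
      rw [hsfin, Finset.prod_insert hnone, Finset.prod_map]
      simp only [Function.Embedding.some_apply, hu, Option.elim_none, Option.elim_some, neg_neg]
      rw [show -((∑ ℓ, w ℓ) - 1) = 1 - ∑ ℓ, w ℓ by ring]
    rw [hsplit, hprod, ← hwlast]
    ring
  -- gm_radon application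
  have hVpos : ∀ z : Fin d → ℝ, z ∈ SS d → ∀ o ∈ sfin,
      0 < Option.elim o (∑ i, z i) (fun ℓ => BB (αs ℓ) z) := by
    rintro z hz (_ | ℓ) ho
    · exact sum_pos' hz
    · exact BB_pos hz
  have hradon := gm_radon sfin u huge (hVpos x hx) (hVpos y hy)
    (BB_pos hx (α := αs last)) (BB_pos hy (α := αs last))
  have hG : (∑ i, (x + y) i) ^ (1 - ∑ ℓ, w ℓ) * ∏ ℓ, BB (αs ℓ) (x + y) ^ w ℓ ≤
      ((∑ i, x i) ^ (1 - ∑ ℓ, w ℓ) * ∏ ℓ, BB (αs ℓ) x ^ w ℓ) +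
      ((∑ i, y i) ^ (1 - ∑ ℓ, w ℓ) * ∏ ℓ, BB (αs ℓ) y ^ w ℓ) := by
    rw [hGeq x hx, hGeq y hy, hGeq (x + y) hxy]
    refine le_trans ?_ hradon
    have hnum : BB (αs last) (x + y) ^ (1 + ∑ o ∈ sfin, u o) ≤
        (BB (αs last) x + BB (αs last) y) ^ (1 + ∑ o ∈ sfin, u o) :=
      Real.rpow_le_rpow (BB_pos hxy).le (BB_subadd_last hαlast hx hy) (by linarith)
    have hden : (∏ o ∈ sfin, (Option.elim o (∑ i, (x + y) i) (fun ℓ => BB (αs ℓ) (x + y))) ^ (-u o))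
        ≤ ∏ o ∈ sfin, (Option.elim o (∑ i, x i) (fun ℓ => BB (αs ℓ) x) +
            Option.elim o (∑ i, y i) (fun ℓ => BB (αs ℓ) y)) ^ (-u o) := by
      refine Finset.prod_le_prod (fun o ho => Real.rpow_nonneg (hVpos _ hxy o ho).le _)
        (fun o ho => ?_)
      have hsup : Option.elim o (∑ i, x i) (fun ℓ => BB (αs ℓ) x) +
          Option.elim o (∑ i, y i) (fun ℓ => BB (αs ℓ) y) ≤
          Option.elim o (∑ i, (x + y) i) (fun ℓ => BB (αs ℓ) (x + y)) := by
        rcases o with _ | ℓ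
        · simp only [Option.elim_none]
          exact le_of_eq sum_add_apply.symm
        · simp only [Option.elim_some]
          have hℓ : ℓ ≠ last := by
            rw [hsfin] at ho
            simp only [Finset.mem_insert, Finset.mem_map, Function.Embedding.some_apply] at ho
            rcases ho with h | ⟨m, hm, hmeq⟩
            · exact absurd h (by simp)
            · have : m = ℓ := by injection hmeq
              subst this
              exact (Finset.mem_erase.1 hm).1
          exact BB_superadd (hαlt ℓ hℓ) hx hy
      refine Real.antitoneOn_rpow_Ioi_of_exponent_nonpos (by linarith [huge o ho])
        (Set.mem_Ioi.2 (add_pos (hVpos x hx o ho) (hVpos y hy o ho)))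
        (Set.mem_Ioi.2 (hVpos _ hxy o ho)) hsup
    exact mul_le_mul hnum hden
      (Finset.prod_nonneg fun o ho => Real.rpow_nonneg (hVpos _ hxy o ho).le _)
      (Real.rpow_nonneg (add_pos (BB_pos hx) (BB_pos hy)).le _)
  -- DD parts
  have hGxpos : 0 < (∑ i, x i) ^ (1 - ∑ ℓ, w ℓ) * ∏ ℓ, BB (αs ℓ) x ^ w ℓ :=
    mul_pos (Real.rpow_pos_of_pos (sum_pos' hx) _)
      (Finset.prod_pos fun ℓ _ => Real.rpow_pos_of_pos (BB_pos hx) _)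
  have hGypos : 0 < (∑ i, y i) ^ (1 - ∑ ℓ, w ℓ) * ∏ ℓ, BB (αs ℓ) y ^ w ℓ :=
    mul_pos (Real.rpow_pos_of_pos (sum_pos' hy) _)
      (Finset.prod_pos fun ℓ _ => Real.rpow_pos_of_pos (BB_pos hy) _)
  have hDxy_pos : 0 < ∏ ℓ, DD (αs ℓ) (x + y) (e ℓ) :=
    Finset.prod_pos fun ℓ _ => DD_pos hxy _
  have hDx : (∏ ℓ, DD (αs ℓ) (x + y) (e ℓ)) ≤ ∏ ℓ, DD (αs ℓ) x (e ℓ) :=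
    Finset.prod_le_prod (fun ℓ _ => (DD_pos hxy _).le)
      (fun ℓ _ => DD_add_le_DD hx hy.1 (he ℓ))
  have hDy : (∏ ℓ, DD (αs ℓ) (x + y) (e ℓ)) ≤ ∏ ℓ, DD (αs ℓ) y (e ℓ) := by
    rw [show x + y = y + x from add_comm x y]
    exact Finset.prod_le_prod (fun ℓ _ => (DD_pos (add_mem_SS hy hx) _).le)
      (fun ℓ _ => DD_add_le_DD hy hx.1 (he ℓ))
  calc (∏ ℓ, DD (αs ℓ) (x + y) (e ℓ)) *
      ((∑ i, (x + y) i) ^ (1 - ∑ ℓ, w ℓ) * ∏ ℓ, BB (αs ℓ) (x + y) ^ w ℓ)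
      ≤ (∏ ℓ, DD (αs ℓ) (x + y) (e ℓ)) *
        (((∑ i, x i) ^ (1 - ∑ ℓ, w ℓ) * ∏ ℓ, BB (αs ℓ) x ^ w ℓ) +
         ((∑ i, y i) ^ (1 - ∑ ℓ, w ℓ) * ∏ ℓ, BB (αs ℓ) y ^ w ℓ)) :=
        mul_le_mul_of_nonneg_left hG hDxy_pos.le
    _ = (∏ ℓ, DD (αs ℓ) (x + y) (e ℓ)) *
          ((∑ i, x i) ^ (1 - ∑ ℓ, w ℓ) * ∏ ℓ, BB (αs ℓ) x ^ w ℓ) +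
        (∏ ℓ, DD (αs ℓ) (x + y) (e ℓ)) *
          ((∑ i, y i) ^ (1 - ∑ ℓ, w ℓ) * ∏ ℓ, BB (αs ℓ) y ^ w ℓ) := by ring
    _ ≤ _ :=
        add_le_add (mul_le_mul_of_nonneg_right hDx hGxpos.le)
          (mul_le_mul_of_nonneg_right hDy hGypos.le)

lemma subadd_convexB {N : ℕ} (hN : 0 < N) (αs : Fin N → ℝ≥0∞) (τs : Fin N → ℝ)
    (hτpos : ∀ ℓ, 0 < τs ℓ) {t : ℝ} (ht : t < 0)
    (hblt : ∀ ℓ : Fin N, (ℓ : ℕ) < N - 1 → αs ℓ < 1)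
    (hblast : 1 < αs ⟨N - 1, Nat.sub_lt hN Nat.one_pos⟩)
    (hsum : ∑ ℓ, τs ℓ * aRatio (αs ℓ) ≤ 1 / t) (x : Fin d → ℝ) (hx : x ∈ SS d)
    (y : Fin d → ℝ) (hy : y ∈ SS d) :
    (∑ i, (x + y) i) *
      exp2 (t * ∑ ℓ, τs ℓ * renyi (αs ℓ) (fun i => (x + y) i / ∑ j, (x + y) j)) ≤
    (∑ i, x i) * exp2 (t * ∑ ℓ, τs ℓ * renyi (αs ℓ) (fun i => x i / ∑ j, x j)) +
    (∑ i, y i) * exp2 (t * ∑ ℓ, τs ℓ * renyi (αs ℓ) (fun i => y i / ∑ j, y j)) := by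
  set last : Fin N := ⟨N - 1, Nat.sub_lt hN Nat.one_pos⟩ with hlastdef
  have hne : ∀ ℓ : Fin N, ℓ ≠ last → αs ℓ < 1 := by
    intro ℓ hℓ
    refine hblt ℓ ?_
    have h1 : (ℓ : ℕ) < N := ℓ.isLt
    have h2 : (ℓ : ℕ) ≠ N - 1 := fun h => hℓ (Fin.ext h)
    omega
  have hα1 : ∀ ℓ, αs ℓ ≠ 1 := by
    intro ℓ
    by_cases hℓ : ℓ = last
    · subst hℓ; exact (hblast).ne'
    · exact (hne ℓ hℓ).ne
  have hxy := add_mem_SS hx hy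
  rw [f_eq αs τs t hα1 hx, f_eq αs τs t hα1 hy, f_eq αs τs t hα1 hxy]
  have hW : 1 ≤ ∑ ℓ, t * τs ℓ * aRatio (αs ℓ) := by
    have h2 := mul_le_mul_of_nonpos_left hsum ht.le
    rw [mul_one_div, div_self ht.ne] at h2
    calc (1:ℝ) ≤ t * ∑ ℓ, τs ℓ * aRatio (αs ℓ) := h2
      _ = ∑ ℓ, t * τs ℓ * aRatio (αs ℓ) := by
          rw [Finset.mul_sum]; exact Finset.sum_congr rfl fun ℓ _ => by ring
  exact core_subadd αs (fun ℓ => t * τs ℓ * aRatio (αs ℓ)) (fun ℓ => t * τs ℓ) last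
    (fun ℓ hℓ => mul_nonpos_of_nonpos_of_nonneg
      (mul_nonpos_of_nonpos_of_nonneg ht.le (hτpos ℓ).le) (aRatio_nonneg (hne ℓ hℓ)))
    hW (fun ℓ => mul_nonpos_of_nonpos_of_nonneg ht.le (hτpos ℓ).le)
    hne hblast hx hy


lemma exists_pos_of_prob {p : Fin d → ℝ} (hp1 : ∀ i, 0 ≤ p i) (hp2 : ∑ i, p i = 1) :
    ∃ i, 0 < p i := by
  by_contra hcon
  push_neg at hcon
  have : ∑ i, p i ≤ 0 := Finset.sum_nonpos fun i _ => hcon i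
  rw [hp2] at this
  linarith

/-- Pointwise concavity of the Rényi entropy on the simplex, for `α ≤ 1`. -/
lemma renyi_mix_ge {α : ℝ≥0∞} (hα : α ≤ 1) {p q : Fin d → ℝ}
    (hp1 : ∀ i, 0 ≤ p i) (hp2 : ∑ i, p i = 1) (hq1 : ∀ i, 0 ≤ q i) (hq2 : ∑ i, q i = 1)
    {a b : ℝ} (ha : 0 < a) (hb : 0 < b) (hab : a + b = 1) :
    a * renyi α p + b * renyi α q ≤ renyi α (fun i => a * p i + b * q i) := by
  classical
  have hlog2 : (0:ℝ) < Real.log 2 := Real.log_pos one_lt_two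
  by_cases h0 : α = 0
  · subst h0
    have hmp : Nat.card {i : Fin d // 0 < p i} ≤
        Nat.card {i : Fin d // 0 < a * p i + b * q i} := by
      simp only [Nat.card_eq_fintype_card]
      exact Fintype.card_subtype_mono _ _ fun i hi =>
        add_pos_of_pos_of_nonneg (mul_pos ha hi) (mul_nonneg hb.le (hq1 i))
    have hmq : Nat.card {i : Fin d // 0 < q i} ≤
        Nat.card {i : Fin d // 0 < a * p i + b * q i} := by
      simp only [Nat.card_eq_fintype_card]
      exact Fintype.card_subtype_mono _ _ fun i hi =>
        add_pos_of_nonneg_of_pos (mul_nonneg ha.le (hp1 i)) (mul_pos hb hi)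
    have hppos : 0 < Nat.card {i : Fin d // 0 < p i} := by
      obtain ⟨i, hi⟩ := exists_pos_of_prob hp1 hp2
      have : Nonempty {i : Fin d // 0 < p i} := ⟨⟨i, hi⟩⟩
      rw [Nat.card_eq_fintype_card]; exact Fintype.card_pos
    have hqpos : 0 < Nat.card {i : Fin d // 0 < q i} := by
      obtain ⟨i, hi⟩ := exists_pos_of_prob hq1 hq2
      have : Nonempty {i : Fin d // 0 < q i} := ⟨⟨i, hi⟩⟩
      rw [Nat.card_eq_fintype_card]; exact Fintype.card_pos
    have hren : ∀ r : Fin d → ℝ, renyi 0 r = log2 (Nat.card {i : Fin d // 0 < r i}) := by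
      intro r; simp only [renyi, if_true]
    rw [hren p, hren q, hren (fun i => a * p i + b * q i)]
    have l1 : log2 (Nat.card {i : Fin d // 0 < p i} : ℝ) ≤
        log2 (Nat.card {i : Fin d // 0 < a * p i + b * q i} : ℝ) :=
      log2_le_log2 (by exact_mod_cast hppos) (by exact_mod_cast hmp)
    have l2 : log2 (Nat.card {i : Fin d // 0 < q i} : ℝ) ≤
        log2 (Nat.card {i : Fin d // 0 < a * p i + b * q i} : ℝ) :=
      log2_le_log2 (by exact_mod_cast hqpos) (by exact_mod_cast hmq)
    calc a * log2 (Nat.card {i : Fin d // 0 < p i} : ℝ)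
          + b * log2 (Nat.card {i : Fin d // 0 < q i} : ℝ)
        ≤ a * log2 (Nat.card {i : Fin d // 0 < a * p i + b * q i} : ℝ)
          + b * log2 (Nat.card {i : Fin d // 0 < a * p i + b * q i} : ℝ) :=
          add_le_add (mul_le_mul_of_nonneg_left l1 ha.le) (mul_le_mul_of_nonneg_left l2 hb.le)
      _ = log2 (Nat.card {i : Fin d // 0 < a * p i + b * q i} : ℝ) := by
          rw [← add_mul, hab, one_mul]
  by_cases h1 : α = 1
  · subst h1
    have hren : ∀ r : Fin d → ℝ, renyi 1 r = (∑ i, Real.negMulLog (r i)) / Real.log 2 := by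
      intro r
      have e1 : renyi 1 r = -∑ i, r i * log2 (r i) := by
        simp [renyi]
      rw [e1, Finset.sum_div, ← Finset.sum_neg_distrib]
      refine Finset.sum_congr rfl fun i _ => ?_
      unfold Real.negMulLog log2 Real.logb
      field_simp
    rw [hren p, hren q, hren (fun i => a * p i + b * q i)]
    have key : a * ∑ i, Real.negMulLog (p i) + b * ∑ i, Real.negMulLog (q i) ≤
        ∑ i, Real.negMulLog (a * p i + b * q i) := by
      rw [Finset.mul_sum, Finset.mul_sum, ← Finset.sum_add_distrib]
      refine Finset.sum_le_sum fun i _ => ?_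
      have := Real.concaveOn_negMulLog.2 (Set.mem_Ici.2 (hp1 i)) (Set.mem_Ici.2 (hq1 i))
        ha.le hb.le hab
      simpa [smul_eq_mul] using this
    calc a * ((∑ i, Real.negMulLog (p i)) / Real.log 2)
          + b * ((∑ i, Real.negMulLog (q i)) / Real.log 2)
        = (a * ∑ i, Real.negMulLog (p i) + b * ∑ i, Real.negMulLog (q i)) / Real.log 2 := by
          ring
      _ ≤ (∑ i, Real.negMulLog (a * p i + b * q i)) / Real.log 2 :=
          (div_le_div_iff_of_pos_right hlog2).mpr key
  · have hlt : α < 1 := lt_of_le_of_ne hα h1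
    have htop : α ≠ ⊤ := ne_top_of_lt hlt
    have ha0 : 0 < α.toReal := ENNReal.toReal_pos h0 htop
    have ha1 : α.toReal < 1 := toReal_lt_one' hlt
    obtain ⟨ip, hip⟩ := exists_pos_of_prob hp1 hp2
    obtain ⟨iq, hiq⟩ := exists_pos_of_prob hq1 hq2
    have hU : 0 < ∑ i, p i ^ α.toReal :=
      Finset.sum_pos' (fun i _ => Real.rpow_nonneg (hp1 i) _)
        ⟨ip, Finset.mem_univ _, Real.rpow_pos_of_pos hip _⟩
    have hV : 0 < ∑ i, q i ^ α.toReal :=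
      Finset.sum_pos' (fun i _ => Real.rpow_nonneg (hq1 i) _)
        ⟨iq, Finset.mem_univ _, Real.rpow_pos_of_pos hiq _⟩
    have hren : ∀ r : Fin d → ℝ,
        renyi α r = (1 - α.toReal)⁻¹ * log2 (∑ i, r i ^ α.toReal) := by
      intro r; simp only [renyi, if_neg h0, if_neg h1, if_neg htop]
    rw [hren p, hren q, hren (fun i => a * p i + b * q i)]
    have key1 : a * ∑ i, p i ^ α.toReal + b * ∑ i, q i ^ α.toReal ≤
        ∑ i, (a * p i + b * q i) ^ α.toReal := by
      rw [Finset.mul_sum, Finset.mul_sum, ← Finset.sum_add_distrib]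
      refine Finset.sum_le_sum fun i _ => ?_
      have := (Real.concaveOn_rpow ha0.le ha1.le).2 (Set.mem_Ici.2 (hp1 i))
        (Set.mem_Ici.2 (hq1 i)) ha.le hb.le hab
      simpa [smul_eq_mul] using this
    have hmixpos : 0 < a * (∑ i, p i ^ α.toReal) + b * (∑ i, q i ^ α.toReal) := by
      positivity
    have key2 : a * log2 (∑ i, p i ^ α.toReal) + b * log2 (∑ i, q i ^ α.toReal) ≤
        log2 (∑ i, (a * p i + b * q i) ^ α.toReal) :=
      (log2_concave hU hV ha.le hb.le hab).trans (log2_le_log2 hmixpos key1)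
    have hinv : (0:ℝ) ≤ (1 - α.toReal)⁻¹ := by
      rw [inv_nonneg]; linarith
    calc a * ((1 - α.toReal)⁻¹ * log2 (∑ i, p i ^ α.toReal))
          + b * ((1 - α.toReal)⁻¹ * log2 (∑ i, q i ^ α.toReal))
        = (1 - α.toReal)⁻¹ * (a * log2 (∑ i, p i ^ α.toReal)
            + b * log2 (∑ i, q i ^ α.toReal)) := by ring
      _ ≤ (1 - α.toReal)⁻¹ * log2 (∑ i, (a * p i + b * q i) ^ α.toReal) :=
          mul_le_mul_of_nonneg_left key2 hinv

lemma exp2_le_exp2 {A B : ℝ} (h : A ≤ B) : exp2 A ≤ exp2 B :=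
  (Real.rpow_le_rpow_left_iff one_lt_two).2 h

lemma exp2_eq_exp (z : ℝ) : exp2 z = Real.exp (Real.log 2 * z) := by
  rw [exp2, Real.rpow_def_of_pos two_pos]

lemma exp2_mix {A B a b : ℝ} (ha : 0 ≤ a) (hb : 0 ≤ b) (hab : a + b = 1) :
    exp2 (a * A + b * B) ≤ a * exp2 A + b * exp2 B := by
  rw [exp2_eq_exp, exp2_eq_exp, exp2_eq_exp]
  have h := convexOn_exp.2 (Set.mem_univ (Real.log 2 * A)) (Set.mem_univ (Real.log 2 * B))
    ha hb hab
  simp only [smul_eq_mul] at h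
  calc Real.exp (Real.log 2 * (a * A + b * B))
      = Real.exp (a * (Real.log 2 * A) + b * (Real.log 2 * B)) := by ring_nf
    _ ≤ a * Real.exp (Real.log 2 * A) + b * Real.exp (Real.log 2 * B) := h

lemma subadd_convexA {N : ℕ} (αs : Fin N → ℝ≥0∞) (τs : Fin N → ℝ)
    (hτpos : ∀ ℓ, 0 < τs ℓ) {t : ℝ} (ht : t < 0) (hα : ∀ ℓ, αs ℓ ≤ 1)
    (x : Fin d → ℝ) (hx : x ∈ SS d) (y : Fin d → ℝ) (hy : y ∈ SS d) :
    (∑ i, (x + y) i) *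
      exp2 (t * ∑ ℓ, τs ℓ * renyi (αs ℓ) (fun i => (x + y) i / ∑ j, (x + y) j)) ≤
    (∑ i, x i) * exp2 (t * ∑ ℓ, τs ℓ * renyi (αs ℓ) (fun i => x i / ∑ j, x j)) +
    (∑ i, y i) * exp2 (t * ∑ ℓ, τs ℓ * renyi (αs ℓ) (fun i => y i / ∑ j, y j)) := by
  have hsx : 0 < ∑ i, x i := sum_pos' hx
  have hsy : 0 < ∑ i, y i := sum_pos' hy
  have hS : 0 < ∑ i, (x + y) i := by rw [sum_add_apply]; linarith
  set lam := (∑ i, x i) / ∑ i, (x + y) i with hlam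
  set mu := (∑ i, y i) / ∑ i, (x + y) i with hmu
  have hlam0 : 0 < lam := div_pos hsx hS
  have hmu0 : 0 < mu := div_pos hsy hS
  have hlm : lam + mu = 1 := by
    rw [hlam, hmu, ← add_div, sum_add_apply, div_self (by linarith : (∑ i, x i) + ∑ i, y i ≠ 0)]
  have hm : (fun i => (x + y) i / ∑ j, (x + y) j)
      = fun i => lam * (x i / ∑ j, x j) + mu * (y i / ∑ j, y j) := by
    funext i
    rw [hlam, hmu]
    have h1 : (x + y) i = x i + y i := rfl
    have h2 : (∑ j, (x + y) j) = (∑ j, x j) + ∑ j, y j := sum_add_apply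
    have h3 : (∑ j, x j) + (∑ j, y j) ≠ 0 := by linarith
    rw [h1, h2]
    field_simp
  have hp1 : ∀ i, 0 ≤ x i / ∑ j, x j := fun i => div_nonneg (hx.1 i) hsx.le
  have hp2 : ∑ i, x i / ∑ j, x j = 1 := by
    rw [← Finset.sum_div, div_self hsx.ne']
  have hq1 : ∀ i, 0 ≤ y i / ∑ j, y j := fun i => div_nonneg (hy.1 i) hsy.le
  have hq2 : ∑ i, y i / ∑ j, y j = 1 := by
    rw [← Finset.sum_div, div_self hsy.ne']
  have hΦ : lam * (∑ ℓ, τs ℓ * renyi (αs ℓ) (fun i => x i / ∑ j, x j))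
      + mu * (∑ ℓ, τs ℓ * renyi (αs ℓ) (fun i => y i / ∑ j, y j))
      ≤ ∑ ℓ, τs ℓ * renyi (αs ℓ) (fun i => (x + y) i / ∑ j, (x + y) j) := by
    rw [hm, Finset.mul_sum, Finset.mul_sum, ← Finset.sum_add_distrib]
    refine Finset.sum_le_sum fun ℓ _ => ?_
    have hkey := renyi_mix_ge (hα ℓ) hp1 hp2 hq1 hq2 hlam0 hmu0 hlm
    calc lam * (τs ℓ * renyi (αs ℓ) (fun i => x i / ∑ j, x j))
        + mu * (τs ℓ * renyi (αs ℓ) (fun i => y i / ∑ j, y j))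
        = τs ℓ * (lam * renyi (αs ℓ) (fun i => x i / ∑ j, x j)
            + mu * renyi (αs ℓ) (fun i => y i / ∑ j, y j)) := by ring
      _ ≤ τs ℓ * renyi (αs ℓ)
            (fun i => lam * (x i / ∑ j, x j) + mu * (y i / ∑ j, y j)) :=
          mul_le_mul_of_nonneg_left hkey (hτpos ℓ).le
  have htΦ : t * ∑ ℓ, τs ℓ * renyi (αs ℓ) (fun i => (x + y) i / ∑ j, (x + y) j)
      ≤ lam * (t * ∑ ℓ, τs ℓ * renyi (αs ℓ) (fun i => x i / ∑ j, x j))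
        + mu * (t * ∑ ℓ, τs ℓ * renyi (αs ℓ) (fun i => y i / ∑ j, y j)) := by
    have := mul_le_mul_of_nonpos_left hΦ ht.le
    calc t * ∑ ℓ, τs ℓ * renyi (αs ℓ) (fun i => (x + y) i / ∑ j, (x + y) j)
        ≤ t * (lam * (∑ ℓ, τs ℓ * renyi (αs ℓ) (fun i => x i / ∑ j, x j))
            + mu * (∑ ℓ, τs ℓ * renyi (αs ℓ) (fun i => y i / ∑ j, y j))) := this
      _ = lam * (t * ∑ ℓ, τs ℓ * renyi (αs ℓ) (fun i => x i / ∑ j, x j))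
          + mu * (t * ∑ ℓ, τs ℓ * renyi (αs ℓ) (fun i => y i / ∑ j, y j)) := by ring
  have hexp := (exp2_le_exp2 htΦ).trans (exp2_mix hlam0.le hmu0.le hlm)
  calc (∑ i, (x + y) i) *
      exp2 (t * ∑ ℓ, τs ℓ * renyi (αs ℓ) (fun i => (x + y) i / ∑ j, (x + y) j))
      ≤ (∑ i, (x + y) i) *
        (lam * exp2 (t * ∑ ℓ, τs ℓ * renyi (αs ℓ) (fun i => x i / ∑ j, x j))
          + mu * exp2 (t * ∑ ℓ, τs ℓ * renyi (αs ℓ) (fun i => y i / ∑ j, y j))) :=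
        mul_le_mul_of_nonneg_left hexp hS.le
    _ = ((∑ i, (x + y) i) * lam) *
          exp2 (t * ∑ ℓ, τs ℓ * renyi (αs ℓ) (fun i => x i / ∑ j, x j)) +
        ((∑ i, (x + y) i) * mu) *
          exp2 (t * ∑ ℓ, τs ℓ * renyi (αs ℓ) (fun i => y i / ∑ j, y j)) := by ring
    _ = (∑ i, x i) * exp2 (t * ∑ ℓ, τs ℓ * renyi (αs ℓ) (fun i => x i / ∑ j, x j)) +
        (∑ i, y i) * exp2 (t * ∑ ℓ, τs ℓ * renyi (αs ℓ) (fun i => y i / ∑ j, y j)) := by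
        rw [hlam, hmu, mul_div_cancel₀ _ hS.ne', mul_div_cancel₀ _ hS.ne']

end S12

/-- Concavity/convexity for discrete measures: sufficient conditions on
`t`, the points `α₁ < ⋯ < α_N` and the weights `τ₁, …, τ_N` under which
`x ↦ ‖x‖₁ · 2^(t·∑ℓ τℓ·H_{αℓ}(x/‖x‖₁))` is concave, respectively convex, on
`(ℝ≥0)^d ∖ {0}`. -/
theorem discrete_measure_concavity_convexity (d N : ℕ) (hN : 0 < N)
    (αs : Fin N → ℝ≥0∞) (hmono : StrictMono αs)
    (τs : Fin N → ℝ) (hτpos : ∀ ℓ, 0 < τs ℓ) (hτsum : ∑ ℓ, τs ℓ = 1)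
    (t : ℝ) (ht : t ≠ 0) :
    ((0 < t ∧ (∀ ℓ, αs ℓ < 1) ∧ ∑ ℓ, τs ℓ * aRatio (αs ℓ) ≤ 1 / t) →
      ConcaveOn ℝ {x : Fin d → ℝ | (∀ i, 0 ≤ x i) ∧ x ≠ 0}
        (fun x => (∑ i, x i) *
          exp2 (t * ∑ ℓ, τs ℓ * renyi (αs ℓ) (fun i => x i / ∑ j, x j)))) ∧
    ((t < 0 ∧ ((∀ ℓ, αs ℓ ≤ 1) ∨
        ((∀ ℓ : Fin N, (ℓ : ℕ) < N - 1 → αs ℓ < 1) ∧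
          1 < αs ⟨N - 1, Nat.sub_lt hN Nat.one_pos⟩ ∧
          ∑ ℓ, τs ℓ * aRatio (αs ℓ) ≤ 1 / t))) →
      ConvexOn ℝ {x : Fin d → ℝ | (∀ i, 0 ≤ x i) ∧ x ≠ 0}
        (fun x => (∑ i, x i) *
          exp2 (t * ∑ ℓ, τs ℓ * renyi (αs ℓ) (fun i => x i / ∑ j, x j)))) := by
  constructor
  · rintro ⟨htpos, hαlt, hsum⟩
    exact S12.concaveOn_of_superadd _ (S12.f_homog αs τs t)
      (fun x hx y hy => S12.superadd_concave αs τs hτpos htpos hαlt hsum x hx y hy)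
  · rintro ⟨htneg, hcase⟩
    apply S12.convexOn_of_subadd _ (S12.f_homog αs τs t)
    rcases hcase with hA | ⟨hb1, hb2, hb3⟩
    · exact fun x hx y hy => S12.subadd_convexA αs τs hτpos htneg hA x hx y hy
    · exact fun x hx y hy => S12.subadd_convexB hN αs τs hτpos htneg hb1 hb2 hb3 x hx y hy
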